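/- If m is a central word over {a,b}, then the periodic bi-infinite word ⋯(amb)(amb)(amb)⋯, obtained by repeating the block a·m·b bi-infinitely, is balanced (equivalently, satisfies the Markoff condition). -/

import Mathlib

/-!
Alphabet `{a, b}` is modelled by `Bool`, with `false` playing the role of the
letter `a` and `true` the role of the letter `b`.
-/

/-- `w` is a (finite) factor of the bi-infinite word `s : ℤ → α`. -/
def IsFactorZ {α : Type*} (s : ℤ → α) (w : List α) : Prop :=
  ∃ i : ℤ, ∀ (k : ℕ) (h : k < w.length), s (i + k) = w.get ⟨k, h⟩

/-- The bi-infinite word `s` satisfies the Markoff condition. -/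
def MarkoffCondition {α : Type*} (s : ℤ → α) : Prop :=
  ∀ i : ℤ, s i ≠ s (i + 1) →
    (∀ k : ℕ, s (i - 1 - k) = s (i + 2 + k)) ∨
      ∃ n : ℕ, (∀ k : ℕ, k < n → s (i - 1 - k) = s (i + 2 + k)) ∧
        s (i - 1 - n) = s (i + 1) ∧ s (i + 2 + n) = s i

/-- A finite word over `{a, b}` is balanced if any two factors of equal length
have numbers of occurrences of the letter `a` differing by at most `1`. -/
def BalancedList (w : List Bool) : Prop :=
  ∀ u v : List Bool, u <:+: w → v <:+: w → u.length = v.length →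
    |(u.count false : ℤ) - (v.count false : ℤ)| ≤ 1

/-- A finite word `w` is central if both `awb` and `bwa` are balanced. -/
def IsCentral (w : List Bool) : Prop :=
  BalancedList (false :: (w ++ [true])) ∧ BalancedList (true :: (w ++ [false]))

/-- A bi-infinite word over `{a, b}` is balanced if any two factors of equal
length have numbers of occurrences of the letter `a` differing by at most 1. -/
def BalancedZ (s : ℤ → Bool) : Prop :=
  ∀ u v : List Bool, IsFactorZ s u → IsFactorZ s v → u.length = v.length →
    |(u.count false : ℤ) - (v.count false : ℤ)| ≤ 1

/-- The periodic bi-infinite word with period block `p`: the letter at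
position `i ∈ ℤ` is the `(i mod |p|)`-th letter of `p`. -/
def periodicWord (p : List Bool) : ℤ → Bool :=
  fun i => p.getD (i % (p.length : ℤ)).toNat false

/-- number of `false` letters in the window `[i, i+L)` of `s`. -/
def cnt (s : ℤ → Bool) (i : ℤ) : ℕ → ℤ
  | 0 => 0
  | (L+1) => cnt s i L + (if s (i + L) = false then 1 else 0)

lemma cnt_add (s : ℤ → Bool) (i : ℤ) (L₁ L₂ : ℕ) :
    cnt s i (L₁ + L₂) = cnt s i L₁ + cnt s (i + L₁) L₂ := by
  induction L₂ with
  | zero => simp [cnt]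
  | succ L ih =>
      show cnt s i ((L₁ + L) + 1) = _
      rw [cnt, ih, cnt]
      push_cast
      ring_nf

lemma cnt_succ_left (s : ℤ → Bool) (i : ℤ) (L : ℕ) :
    cnt s i (L + 1) = (if s i = false then 1 else 0) + cnt s (i + 1) L := by
  have := cnt_add s i 1 L
  rw [Nat.add_comm 1 L] at this
  simpa [cnt] using this

lemma cnt_congr (s s' : ℤ → Bool) (i i' : ℤ) (L : ℕ)
    (hs : ∀ t : ℕ, t < L → s (i + t) = s' (i' + t)) :
    cnt s i L = cnt s' i' L := by
  induction L with
  | zero => rfl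
  | succ L ih =>
      rw [cnt, cnt, hs L (by omega), ih (fun t ht => hs t (by omega))]

lemma cnt_rev (s s' : ℤ → Bool) (i i' : ℤ) (L : ℕ)
    (hs : ∀ t : ℕ, t < L → s (i + t) = s' (i' + (L - 1 - t : ℕ))) :
    cnt s i L = cnt s' i' L := by
  induction L generalizing i with
  | zero => rfl
  | succ L ih =>
      rw [cnt_succ_left, cnt]
      have h0 := hs 0 (by omega)
      simp only [Nat.sub_zero, Nat.add_sub_cancel, Nat.cast_zero, add_zero] at h0
      rw [h0, ih (i + 1) (fun t ht => by
        have := hs (t + 1) (by omega)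
        have e1 : i + 1 + t = i + ((t : ℤ) + 1) := by ring
        have e2 : (L + 1 - 1 - (t + 1) : ℕ) = (L - 1 - t : ℕ) := by omega
        rw [e1]
        rw [e2] at this
        simpa using this)]
      ring

lemma count_factor (s : ℤ → Bool) (u : List Bool) (i : ℤ)
    (hu : ∀ (k : ℕ) (h : k < u.length), s (i + k) = u.get ⟨k, h⟩) :
    (u.count false : ℤ) = cnt s i u.length := by
  induction u generalizing i with
  | nil => simp [cnt]
  | cons x t ih =>
      have h0 := hu 0 (by simp)
      simp only [Nat.cast_zero, add_zero, List.get] at h0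
      rw [List.length_cons, cnt_succ_left, h0]
      have := ih (i + 1) (fun k hk => by
        have := hu (k + 1) (by simpa using Nat.succ_lt_succ hk)
        have e1 : i + 1 + k = i + ((k : ℤ) + 1) := by ring
        rw [e1]
        simpa using this)
      rw [← this]
      rcases x with _ | _ <;> simp [List.count_cons] <;> ring

lemma periodic_mod (p : List Bool) (i : ℤ) :
    periodicWord p i = periodicWord p (i % (p.length : ℤ)) := by
  unfold periodicWord
  rw [Int.emod_emod_of_dvd _ dvd_rfl]

lemma periodic_shift (p : List Bool) (i : ℤ) :
    periodicWord p (i + (p.length : ℤ)) = periodicWord p i := by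
  unfold periodicWord
  have : (i + (p.length:ℤ)) % (p.length:ℤ) = i % (p.length:ℤ) := by
    conv_lhs => rw [show i + (p.length:ℤ) = i + (p.length:ℤ) * 1 by ring]
    exact Int.add_mul_emod_self_left ..
  rw [this]

lemma periodic_nat (p : List Bool) (k : ℕ) (hk : k < p.length) :
    periodicWord p (k : ℤ) = p.get ⟨k, hk⟩ := by
  unfold periodicWord
  rw [Int.emod_eq_of_lt (by positivity) (by exact_mod_cast hk)]
  simp [List.getD_eq_getElem?_getD, List.getElem?_eq_getElem hk]

lemma drop_take_infix {α : Type*} (l : List α) (j L : ℕ) : (l.drop j).take L <:+: l := by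
  refine ⟨l.take j, (l.drop j).drop L, ?_⟩
  rw [List.append_assoc, List.take_append_drop, List.take_append_drop]

lemma bal_win (w : List Bool) (hB : BalancedList w) (j j' L : ℕ)
    (hj : j + L ≤ w.length) (hj' : j' + L ≤ w.length) :
    |((((w.drop j).take L).count false : ℤ)) - (((w.drop j').take L).count false : ℤ)| ≤ 1 := by
  apply hB _ _ (drop_take_infix w j L) (drop_take_infix w j' L)
  simp only [List.length_take, List.length_drop]
  omega

lemma window_count (w : List Bool) (j L : ℕ) :
    (((w.drop j).take L).count false : ℤ) =
      ((w.take (j + L)).count false : ℤ) - ((w.take j).count false : ℤ) := by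
  rw [List.take_add, List.count_append]
  push_cast
  ring

namespace CAux

variable (m : List Bool)

def P : List Bool := false :: (m ++ [true])
def Q : List Bool := true :: (m ++ [false])
def N : ℕ := m.length + 2
def phi (i : ℕ) : ℤ := ((P m).take i).count false
def psi (i : ℕ) : ℤ := ((Q m).take i).count false
def A : ℤ := ((P m).count false : ℤ)

lemma lenP : (P m).length = N m := by simp [P, N]
lemma lenQ : (Q m).length = N m := by simp [Q, N]

lemma phi_zero : phi m 0 = 0 := by simp [phi]
lemma psi_zero : psi m 0 = 0 := by simp [psi]

lemma phi_N : phi m (N m) = A m := by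
  rw [phi, A, ← lenP, List.take_length]

lemma psi_N : psi m (N m) = A m := by
  rw [psi, A, ← lenQ, List.take_length]
  simp [P, Q, List.count_cons, List.count_append]

lemma psi_eq (i : ℕ) (h1 : 1 ≤ i) (h2 : i ≤ N m - 1) : psi m i = phi m i - 1 := by
  obtain ⟨i', rfl⟩ : ∃ i', i = i' + 1 := ⟨i - 1, by omega⟩
  have hi' : i' ≤ m.length := by simp [N] at h2; omega
  rw [psi, phi, Q, P]
  rw [List.take_succ_cons, List.take_succ_cons,
    List.take_append_of_le_length hi', List.take_append_of_le_length hi']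
  simp [List.count_cons]

lemma win_phi (j L : ℕ) :
    ((((P m).drop j).take L).count false : ℤ) = phi m (j + L) - phi m j :=
  window_count _ j L

lemma win_psi (j L : ℕ) :
    ((((Q m).drop j).take L).count false : ℤ) = psi m (j + L) - psi m j :=
  window_count _ j L

lemma interior_eq (j L : ℕ) (hj : 1 ≤ j) (hjL : j + L ≤ N m - 1) :
    ((P m).drop j).take L = ((Q m).drop j).take L := by
  obtain ⟨j', rfl⟩ : ∃ j', j = j' + 1 := ⟨j - 1, by omega⟩
  have hj' : j' ≤ m.length := by simp [N] at hjL; omega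
  have hL : L ≤ m.length - j' := by simp [N] at hjL; omega
  rw [P, Q, List.drop_succ_cons, List.drop_succ_cons,
    List.drop_append_of_le_length hj', List.drop_append_of_le_length hj',
    List.take_append_of_le_length (by simpa using hL),
    List.take_append_of_le_length (by simpa using hL)]

lemma lemS (hc : IsCentral m) (i : ℕ) (h1 : 1 ≤ i) (h2 : i ≤ N m - 1) :
    phi m i + phi m (N m - i) = A m + 1 := by
  have hNi1 : 1 ≤ N m - i := by simp [N] at h2 ⊢; omega
  have hNi2 : N m - i ≤ N m - 1 := by omega
  have e1 : (N m - i) + i = N m := by omega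
  have b1 := bal_win (P m) hc.1 0 (N m - i) i (by rw [lenP]; omega) (by rw [lenP]; omega)
  have b2 := bal_win (Q m) hc.2 0 (N m - i) i (by rw [lenQ]; omega) (by rw [lenQ]; omega)
  rw [win_phi, win_phi, e1, phi_N, zero_add, phi_zero] at b1
  rw [win_psi, win_psi, e1, psi_N, zero_add, psi_zero] at b2
  rw [psi_eq m i h1 h2, psi_eq m (N m - i) hNi1 hNi2] at b2
  rw [abs_le] at b1 b2
  omega

lemma lemW (hc : IsCentral m) (j L : ℕ) (hjL : j + L ≤ N m) :
    phi m L - 1 ≤ phi m (j + L) - phi m j ∧ phi m (j + L) - phi m j ≤ phi m L := by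
  rcases Nat.eq_zero_or_pos j with rfl | hj
  · rw [zero_add, phi_zero]; omega
  rcases Nat.eq_zero_or_pos L with rfl | hL
  · rw [add_zero, phi_zero]; omega
  rcases eq_or_lt_of_le hjL with heq | hlt
  · -- suffix window: j + L = N
    have hL2 : L ≤ N m - 1 := by omega
    have hS := lemS m hc L hL hL2
    have hjj : N m - L = j := by omega
    rw [hjj] at hS
    rw [heq, phi_N]
    omega
  · -- interior window
    have hjL' : j + L ≤ N m - 1 := by omega
    have hL2 : L ≤ N m - 1 := by simp [N] at hjL' ⊢; omega
    have b1 := bal_win (P m) hc.1 0 j L (by rw [lenP]; omega) (by rw [lenP]; omega)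
    have b2 := bal_win (Q m) hc.2 0 j L (by rw [lenQ]; omega) (by rw [lenQ]; omega)
    rw [win_phi, win_phi, zero_add, phi_zero] at b1
    rw [win_psi, win_psi, zero_add, psi_zero] at b2
    have hint : ((((P m).drop j).take L).count false : ℤ)
        = (((Q m).drop j).take L).count false := by
      rw [interior_eq m j L hj hjL']
    rw [win_phi, win_psi] at hint
    rw [psi_eq m L hL hL2] at b2
    rw [abs_le] at b1 b2
    omega


section PerBridge

variable (m : List Bool)

/-- abbreviation for the periodic word built on `P m`. -/
noncomputable def S : ℤ → Bool := periodicWord (P m)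

lemma S_shift (i : ℤ) : S m (i + (N m : ℤ)) = S m i := by
  have := periodic_shift (P m) i
  rwa [lenP] at this

lemma cnt_S_shift (i : ℤ) (L : ℕ) : cnt (S m) (i + (N m : ℤ)) L = cnt (S m) i L := by
  apply cnt_congr
  intro t ht
  have : i + (N m : ℤ) + t = (i + t) + (N m : ℤ) := by ring
  rw [this, S_shift]

lemma cnt_S_mod (i : ℤ) (L : ℕ) : cnt (S m) i L = cnt (S m) (i % (N m : ℤ)) L := by
  apply cnt_congr
  intro t ht
  have h1 : i + t = (i % (N m : ℤ) + t) + (N m : ℤ) * (i / (N m : ℤ)) := by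
    rw [Int.emod_def]; ring
  unfold S periodicWord
  rw [lenP, h1, Int.add_mul_emod_self_left]

lemma cnt_S_window (k L : ℕ) (h : k + L ≤ N m) :
    cnt (S m) (k : ℤ) L = phi m (k + L) - phi m k := by
  have hfac : ∀ (t : ℕ) (ht : t < (((P m).drop k).take L).length),
      S m ((k : ℤ) + t) = (((P m).drop k).take L).get ⟨t, ht⟩ := by
    intro t ht
    have hlen : (((P m).drop k).take L).length = L := by
      simp only [List.length_take, List.length_drop, lenP]; omega
    have htL : t < L := by rwa [hlen] at ht
    have hkt : k + t < (P m).length := by rw [lenP]; omega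
    have h1 : S m ((k : ℤ) + t) = (P m).get ⟨k + t, hkt⟩ := by
      have := periodic_nat (P m) (k + t) hkt
      rw [← this]
      push_cast
      rfl
    rw [h1]
    simp [List.get_eq_getElem]
  have := count_factor (S m) (((P m).drop k).take L) (k : ℤ) hfac
  have hlen : (((P m).drop k).take L).length = L := by
    simp only [List.length_take, List.length_drop, lenP]; omega
  rw [hlen] at this
  rw [← this, win_phi]

lemma cnt_S_full (i : ℤ) : cnt (S m) i (N m) = A m := by
  have step : ∀ j : ℤ, cnt (S m) (j + 1) (N m) = cnt (S m) j (N m) := by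
    intro j
    have h1 : cnt (S m) j (N m + 1) = cnt (S m) j (N m) + (if S m (j + N m) = false then 1 else 0) := rfl
    have h2 := cnt_succ_left (S m) j (N m)
    rw [S_shift] at h1
    rw [h1] at h2
    have h3 : cnt (S m) j 1 = (if S m j = false then 1 else 0) := by simp [cnt]
    omega
  have base : cnt (S m) 0 (N m) = A m := by
    have := cnt_S_window m 0 (N m) (by omega)
    simp only [Nat.zero_add, zero_add, phi_zero, phi_N, sub_zero, Nat.cast_zero] at this
    exact this
  induction i using Int.induction_on with
  | zero => exact base
  | succ k ih => rw [step k]; exact ih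
  | pred k ih => rw [← ih, ← step (-k - 1)]; norm_num

lemma master (hc : IsCentral m) (i : ℤ) (L : ℕ) (hL : L ≤ N m) :
    phi m L - 1 ≤ cnt (S m) i L ∧ cnt (S m) i L ≤ phi m L := by
  have hN : 0 < (N m : ℤ) := by simp [N]; omega
  set r : ℕ := (i % (N m : ℤ)).toNat with hr
  have hr0 : ((r : ℕ) : ℤ) = i % (N m : ℤ) :=
    Int.toNat_of_nonneg (Int.emod_nonneg i (by omega))
  have hrN : r < N m := by
    have := Int.emod_lt_of_pos i hN
    omega
  have hmod : cnt (S m) i L = cnt (S m) (r : ℤ) L := by rw [cnt_S_mod, hr0]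
  rw [hmod]
  by_cases hcase : r + L ≤ N m
  · rw [cnt_S_window m r L hcase]
    have := lemW m hc r L hcase
    omega
  · have hr1 : 1 ≤ r := by omega
    have hL1 : 1 ≤ L := by omega
    set x : ℕ := N m - r with hx
    set y : ℕ := L - x with hy
    have hxy : L = x + y := by omega
    have hsplit : cnt (S m) (r : ℤ) L = cnt (S m) (r : ℤ) x + cnt (S m) ((r : ℤ) + x) y := by
      rw [hxy, cnt_add]
    have hrx : (r : ℤ) + x = (0 : ℤ) + (N m : ℤ) := by push_cast; omega
    have hcy : cnt (S m) ((r : ℤ) + x) y = phi m y := by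
      rw [hrx, cnt_S_shift]
      have := cnt_S_window m 0 y (by omega)
      rw [phi_zero] at this
      simpa using this
    have hcx : cnt (S m) (r : ℤ) x = phi m x - 1 := by
      have hw := cnt_S_window m r x (by omega)
      have hrxN : r + x = N m := by omega
      rw [hrxN, phi_N] at hw
      have hS := lemS m hc x (by omega) (by omega)
      have hNx : N m - x = r := by omega
      rw [hNx] at hS
      omega
    have hsub := lemW m hc x y (by omega)
    rw [← hxy] at hsub
    rw [hsplit, hcx, hcy]
    omega

lemma bound (hc : IsCentral m) (L : ℕ) (i : ℤ) :
    phi m (L % N m) + (L / N m : ℕ) * A m - 1 ≤ cnt (S m) i L ∧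
      cnt (S m) i L ≤ phi m (L % N m) + (L / N m : ℕ) * A m := by
  have hN : 0 < N m := by simp [N]
  induction L using Nat.strong_induction_on generalizing i with
  | _ L ih =>
    by_cases hL : L < N m
    · rw [Nat.mod_eq_of_lt hL, Nat.div_eq_of_lt hL]
      have := master m hc i L (by omega)
      simpa using this
    · obtain ⟨K, rfl⟩ : ∃ K, L = K + N m := ⟨L - N m, by omega⟩
      have hmod : (K + N m) % N m = K % N m := Nat.add_mod_right K (N m)
      have hdiv : (K + N m) / N m = K / N m + 1 := Nat.add_div_right K hN
      have hsplit : cnt (S m) i (K + N m) = cnt (S m) i K + cnt (S m) (i + K) (N m) := cnt_add ..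
      rw [hsplit, cnt_S_full, hmod, hdiv]
      have := ih K (by omega) i
      have hexp : ((K / N m + 1 : ℕ) : ℤ) * A m = ((K / N m : ℕ) : ℤ) * A m + A m := by
        push_cast; ring
      rw [hexp]
      omega

lemma balZ (hc : IsCentral m) : BalancedZ (S m) := by
  rintro u v ⟨i, hi⟩ ⟨j, hj⟩ hlen
  rw [count_factor (S m) u i hi, count_factor (S m) v j hj, hlen]
  have b1 := bound m hc v.length i
  have b2 := bound m hc v.length j
  rw [abs_le]
  omega

end PerBridge
end CAux

lemma bool_resolve {x y z : Bool} (hxy : x ≠ y) (hzy : z ≠ y) : z = x := by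
  revert hxy hzy; revert x y z; decide

lemma ofFn_get_prop (s : ℤ → Bool) (i : ℤ) (L : ℕ) :
    ∀ (k : ℕ) (h : k < (List.ofFn fun k : Fin L => s (i + k)).length),
      s (i + k) = (List.ofFn fun k : Fin L => s (i + k)).get ⟨k, h⟩ := by
  intro k h
  rw [List.get_ofFn]
  rfl

lemma markoff_of_balanced (s : ℤ → Bool) (hb : BalancedZ s) : MarkoffCondition s := by
  intro i hi
  by_cases hall : ∀ k : ℕ, s (i - 1 - k) = s (i + 2 + k)
  · left; exact hall
  right
  push_neg at hall
  have hex : ∃ k : ℕ, s (i - 1 - k) ≠ s (i + 2 + k) := hall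
  set n := Nat.find hex with hn
  have hne : s (i - 1 - n) ≠ s (i + 2 + n) := Nat.find_spec hex
  have hagree : ∀ k : ℕ, k < n → s (i - 1 - k) = s (i + 2 + k) := by
    intro k hk
    by_contra hc'
    exact Nat.find_min hex hk hc'
  refine ⟨n, hagree, ?_⟩
  by_cases hA : s (i - 1 - n) = s (i + 1)
  · refine ⟨hA, ?_⟩
    have h1 : s (i + 2 + n) ≠ s (i + 1) := by rw [← hA]; exact fun e => hne e.symm
    exact bool_resolve hi h1
  · exfalso
    have hA' : s (i - 1 - n) = s i := bool_resolve hi hA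
    have hB' : s (i + 2 + n) = s (i + 1) := by
      have h1 : s (i + 2 + n) ≠ s i := by rw [← hA']; exact fun e => hne e.symm
      exact bool_resolve (Ne.symm hi) h1
    have hucnt := count_factor s _ _ (ofFn_get_prop s (i - 1 - n) (n + 2))
    have hvcnt := count_factor s _ _ (ofFn_get_prop s (i + 1) (n + 2))
    rw [List.length_ofFn] at hucnt hvcnt
    have hbal := hb _ _ ⟨_, ofFn_get_prop s (i - 1 - n) (n + 2)⟩
      ⟨_, ofFn_get_prop s (i + 1) (n + 2)⟩ (by simp)
    -- decompose the two counts
    have hmid : cnt s (i - n) n = cnt s (i + 2) n := by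
      apply cnt_rev
      intro t ht
      have e1 : i - n + t = i - 1 - ((n - 1 - t : ℕ) : ℤ) := by
        have : ((n - 1 - t : ℕ) : ℤ) = (n : ℤ) - 1 - t := by omega
        rw [this]; ring
      rw [e1, hagree (n - 1 - t) (by omega)]
    have hdu : cnt s (i - 1 - n) (n + 2) =
        (if s (i - 1 - n) = false then 1 else 0) + cnt s (i - n) n
          + (if s i = false then 1 else 0) := by
      have h1 : cnt s (i - 1 - n) (n + 2) = (if s (i - 1 - n) = false then 1 else 0)
          + cnt s (i - 1 - n + 1) (n + 1) := cnt_succ_left ..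
      have h2 : cnt s (i - 1 - n + 1) (n + 1) = cnt s (i - 1 - n + 1) n
          + (if s (i - 1 - n + 1 + n) = false then 1 else 0) := rfl
      have e1 : i - 1 - n + 1 = i - n := by ring
      rw [h1, h2, e1, show i - (n : ℤ) + n = i by ring]; ring
    have hdv : cnt s (i + 1) (n + 2) =
        (if s (i + 1) = false then 1 else 0) + cnt s (i + 2) n
          + (if s (i + 2 + n) = false then 1 else 0) := by
      have h1 : cnt s (i + 1) (n + 2) = (if s (i + 1) = false then 1 else 0)
          + cnt s (i + 1 + 1) (n + 1) := cnt_succ_left ..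
      have h2 : cnt s (i + 1 + 1) (n + 1) = cnt s (i + 1 + 1) n
          + (if s (i + 1 + 1 + n) = false then 1 else 0) := rfl
      have e1 : i + 1 + 1 = i + 2 := by ring
      rw [h1, h2, e1]; ring
    rw [hucnt, hvcnt, hdu, hdv, hmid, hA', hB', abs_le] at hbal
    rcases hsi : s i with _ | _ <;> rcases hsi1 : s (i + 1) with _ | _ <;>
        rw [hsi, hsi1] at hbal hi <;>
      first
      | exact hi rfl
      | (simp only [if_pos rfl, reduceIte, Bool.false_eq_true, Bool.true_eq_false,
          if_false, if_true] at hbal; omega)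

theorem periodic_amb_balanced (m : List Bool) (h : IsCentral m) :
    BalancedZ (periodicWord (false :: (m ++ [true]))) ∧
      MarkoffCondition (periodicWord (false :: (m ++ [true]))) := by
  have hb : BalancedZ (CAux.S m) := CAux.balZ m h
  exact ⟨hb, markoff_of_balanced _ hb⟩
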